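/- Let (D_i, Γⁱ)_{i∈ℕ} be a parametrix possessing complex of pre-Hilbert A-modules. Then for each i ∈ ℕ the i-th cohomology group H^i(D,A) = Ker(D_i : Γⁱ → Γ^{i+1}) / Rng(D_{i-1} : Γ^{i-1} → Γⁱ) is isomorphic as an A-module to the module of harmonic elements K^i(D,A) = Ker(Δ_i : Γⁱ → Γⁱ). -/

import Mathlib

/-- A pre-Hilbert module over a unital C*-algebra `A`: a left `A`-module equipped with an
`A`-valued inner product (`A`-linear in the first argument, conjugate-symmetric, positive
definite), whose norm is the one induced by the inner product. -/
class PreHilbertModule (A : Type*) (U : Type*) [CStarAlgebra A] [PartialOrder A]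
    [StarOrderedRing A] [NormedAddCommGroup U] [Module A U] extends Inner A U where
  inner_add_left (x y z : U) : inner (x + y) z = inner x z + inner y z
  inner_smul_left (a : A) (x y : U) : inner (a • x) y = a * inner x y
  star_inner (x y : U) : star (inner x y) = inner y x
  inner_self_nonneg (x : U) : 0 ≤ inner x x
  inner_self_eq_zero (x : U) : inner x x = 0 ↔ x = 0
  norm_eq (x : U) : ‖x‖ = Real.sqrt ‖inner x x‖

section Aux

variable {A : Type*} [CStarAlgebra A] [PartialOrder A] [StarOrderedRing A]
variable {U : Type*} [NormedAddCommGroup U] [Module A U] [PreHilbertModule A U]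

open PreHilbertModule

lemma PHM.inner_zero_left (y : U) : (inner A (0 : U) y : A) = 0 := by
  have h := inner_add_left (A := A) (0 : U) 0 y
  rw [add_zero] at h
  exact left_eq_add.mp h

lemma PHM.inner_zero_right (x : U) : (inner A x (0 : U) : A) = 0 := by
  have : star (inner A (0 : U) x : A) = inner A x (0 : U) := star_inner _ _
  rw [PHM.inner_zero_left, star_zero] at this
  exact this.symm

lemma PHM.inner_add_right (x y z : U) :
    (inner A x (y + z) : A) = inner A x y + inner A x z := by
  have h := congrArg star (inner_add_left (A := A) y z x)
  rwa [star_inner, star_add, star_inner, star_inner] at h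

lemma PHM.inner_sub_left (x y z : U) :
    (inner A (x - y) z : A) = inner A x z - inner A y z := by
  have h := inner_add_left (A := A) (x - y) y z
  rw [sub_add_cancel] at h
  exact eq_sub_of_add_eq h.symm

lemma PHM.add_eq_zero {a b : A} (ha : 0 ≤ a) (hb : 0 ≤ b) (h : a + b = 0) :
    a = 0 ∧ b = 0 := by
  have h1 : a ≤ 0 := h ▸ le_add_of_nonneg_right hb
  have h2 : b ≤ 0 := h ▸ le_add_of_nonneg_left ha
  exact ⟨le_antisymm h1 ha, le_antisymm h2 hb⟩

end Aux

/-- Theorem 4: for a parametrix possessing complex `(D_i, Γ^i)_{i ∈ ℕ}` of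
pre-Hilbert `A`-modules, each cohomology group `H^i(D,A) = Ker D_i / Rng D_{i-1}`
(with `D_{-1} := 0`) is `A`-linearly isomorphic to the module of harmonic elements
`K^i(D,A) = Ker Δ_i`. -/
theorem cohomology_iso_harmonic
    {A : Type*} [CStarAlgebra A] [PartialOrder A] [StarOrderedRing A]
    {Γ : ℕ → Type*} [∀ i, NormedAddCommGroup (Γ i)] [∀ i, Module A (Γ i)]
    [∀ i, PreHilbertModule A (Γ i)]
    (D : ∀ i, Γ i →L[A] Γ (i + 1)) (Dstar : ∀ i, Γ (i + 1) →L[A] Γ i)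
    (hadj : ∀ i (u : Γ i) (v : Γ (i + 1)), (inner A (D i u) v : A) = inner A u (Dstar i v))
    (hcomplex : ∀ i, (D (i + 1)).comp (D i) = 0)
    -- the associated Laplacians (with `D_{-1} := 0`)
    (Δ : ∀ i, Γ i →L[A] Γ i)
    (hΔ0 : Δ 0 = (Dstar 0).comp (D 0))
    (hΔ : ∀ i, Δ (i + 1) = (D i).comp (Dstar i) + (Dstar (i + 1)).comp (D (i + 1)))
    -- the complex is parametrix possessing
    (g p : ∀ i, Γ i →L[A] Γ i)
    (ha : ∀ i, ContinuousLinearMap.id A (Γ i) = (g i).comp (Δ i) + p i)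
    (hb : ∀ i, ContinuousLinearMap.id A (Γ i) = (Δ i).comp (g i) + p i)
    (hc : ∀ i, (Δ i).comp (p i) = 0) :
    Nonempty ((LinearMap.ker (D 0 : Γ 0 →ₗ[A] Γ (0 + 1)) ⧸ (⊥ : Submodule A (LinearMap.ker (D 0 : Γ 0 →ₗ[A] Γ (0 + 1)))))
        ≃ₗ[A] LinearMap.ker (Δ 0 : Γ 0 →ₗ[A] Γ 0)) ∧
    ∀ i, Nonempty ((LinearMap.ker (D (i + 1) : Γ (i + 1) →ₗ[A] Γ (i + 1 + 1)) ⧸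
        Submodule.comap (LinearMap.ker (D (i + 1) : Γ (i + 1) →ₗ[A] Γ (i + 1 + 1))).subtype (LinearMap.range (D i : Γ i →ₗ[A] Γ (i + 1))))
        ≃ₗ[A] LinearMap.ker (Δ (i + 1) : Γ (i + 1) →ₗ[A] Γ (i + 1))) := by
  -- the reversed adjoint relation
  have hadj' : ∀ i (v : Γ (i + 1)) (u : Γ i),
      (inner A (Dstar i v) u : A) = inner A v (D i u) := by
    intro i v u
    have h := congrArg star (hadj i u v)
    rw [PreHilbertModule.star_inner, PreHilbertModule.star_inner] at h
    exact h.symm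
  -- D ∘ D = 0 pointwise
  have hDD : ∀ i (w : Γ i), D (i + 1) (D i w) = 0 := by
    intro i w
    have := DFunLike.congr_fun (hcomplex i) w
    simpa using this
  -- harmonic elements in degree i+1 are killed by both D and Dstar
  have harm : ∀ i (x : Γ (i + 1)), Δ (i + 1) x = 0 →
      D (i + 1) x = 0 ∧ Dstar i x = 0 := by
    intro i x hx
    have hx' : D i (Dstar i x) + Dstar (i + 1) (D (i + 1) x) = 0 := by
      have := DFunLike.congr_fun (hΔ i) x
      simp only [ContinuousLinearMap.add_apply, ContinuousLinearMap.comp_apply] at this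
      rw [← this]; exact hx
    have hinner : (inner A x (D i (Dstar i x)) : A) + inner A x (Dstar (i + 1) (D (i + 1) x))
        = 0 := by
      rw [← PHM.inner_add_right, hx', PHM.inner_zero_right]
    have e1 : (inner A x (D i (Dstar i x)) : A) = inner A (Dstar i x) (Dstar i x) := by
      have h := congrArg star (hadj i (Dstar i x) x)
      rw [PreHilbertModule.star_inner, PreHilbertModule.star_inner] at h
      exact h
    have e2 : (inner A x (Dstar (i + 1) (D (i + 1) x)) : A)
        = inner A (D (i + 1) x) (D (i + 1) x) := (hadj (i + 1) x (D (i + 1) x)).symm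
    rw [e1, e2] at hinner
    obtain ⟨h1, h2⟩ := PHM.add_eq_zero (PreHilbertModule.inner_self_nonneg _)
      (PreHilbertModule.inner_self_nonneg _) hinner
    exact ⟨(PreHilbertModule.inner_self_eq_zero _).mp h2,
      (PreHilbertModule.inner_self_eq_zero _).mp h1⟩
  constructor
  · -- degree 0 : ker D 0 = ker Δ 0
    have hk : LinearMap.ker (D 0 : Γ 0 →ₗ[A] Γ (0 + 1)) = LinearMap.ker (Δ 0 : Γ 0 →ₗ[A] Γ 0) := by
      ext x
      simp only [LinearMap.mem_ker, ContinuousLinearMap.coe_coe]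
      constructor
      · intro hx
        have := DFunLike.congr_fun hΔ0 x
        simp only [ContinuousLinearMap.comp_apply] at this
        rw [this, hx, map_zero]
      · intro hx
        have hΔx : Dstar 0 (D 0 x) = 0 := by
          have := DFunLike.congr_fun hΔ0 x
          simp only [ContinuousLinearMap.comp_apply] at this
          rw [← this]; exact hx
        have : (inner A (D 0 x) (D 0 x) : A) = 0 := by
          rw [hadj 0 x (D 0 x), hΔx, PHM.inner_zero_right]
        exact (PreHilbertModule.inner_self_eq_zero _).mp this
    exact ⟨(Submodule.quotEquivOfEqBot ⊥ rfl).trans (LinearEquiv.ofEq _ _ hk)⟩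
  · intro i
    -- the map x ↦ p (i+1) x from ker D (i+1) to ker Δ (i+1)
    have hppt : ∀ x : Γ (i + 1), Δ (i + 1) (p (i + 1) x) = 0 := by
      intro x
      have := DFunLike.congr_fun (hc (i + 1)) x
      simpa using this
    set f₁ : LinearMap.ker (D (i + 1) : Γ (i + 1) →ₗ[A] Γ (i + 1 + 1)) →ₗ[A] Γ (i + 1) :=
      (p (i + 1) : Γ (i + 1) →ₗ[A] Γ (i + 1)).comp (LinearMap.ker (D (i + 1) : Γ (i + 1) →ₗ[A] Γ (i + 1 + 1))).subtype
      with hf₁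
    have hf₁app : ∀ x : LinearMap.ker (D (i + 1) : Γ (i + 1) →ₗ[A] Γ (i + 1 + 1)), f₁ x = p (i + 1) (x : Γ (i + 1)) := by
      intro x; rfl
    have hmem : ∀ x : LinearMap.ker (D (i + 1) : Γ (i + 1) →ₗ[A] Γ (i + 1 + 1)), f₁ x ∈ LinearMap.ker (Δ (i + 1) : Γ (i + 1) →ₗ[A] Γ (i + 1)) := by
      intro x
      simp only [LinearMap.mem_ker, hf₁app, ContinuousLinearMap.coe_coe]
      exact hppt _
    set f : LinearMap.ker (D (i + 1) : Γ (i + 1) →ₗ[A] Γ (i + 1 + 1)) →ₗ[A] LinearMap.ker (Δ (i + 1) : Γ (i + 1) →ₗ[A] Γ (i + 1)) :=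
      f₁.codRestrict _ hmem with hf
    -- kernel of f
    have hker : LinearMap.ker f =
        Submodule.comap (LinearMap.ker (D (i + 1) : Γ (i + 1) →ₗ[A] Γ (i + 1 + 1))).subtype (LinearMap.range (D i : Γ i →ₗ[A] Γ (i + 1))) := by
      ext x
      have hfx0 : f x = 0 ↔ p (i + 1) (x : Γ (i + 1)) = 0 := by
        rw [Subtype.ext_iff]; rfl
      simp only [LinearMap.mem_ker, Submodule.mem_comap, Submodule.coe_subtype,
        LinearMap.mem_range, hfx0]
      have hbx := DFunLike.congr_fun (hb (i + 1)) (x : Γ (i + 1))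
      simp only [ContinuousLinearMap.id_apply, ContinuousLinearMap.add_apply,
        ContinuousLinearMap.comp_apply] at hbx
      have hΔx := DFunLike.congr_fun (hΔ i) (g (i + 1) (x : Γ (i + 1)))
      simp only [ContinuousLinearMap.add_apply, ContinuousLinearMap.comp_apply] at hΔx
      constructor
      · intro hpx
        -- x = D (D* g x) + D* (D g x), and the second summand vanishes
        set u := g (i + 1) (x : Γ (i + 1)) with hu
        set a := D i (Dstar i u) with hA
        set y := Dstar (i + 1) (D (i + 1) u) with hy
        have hxay : (x : Γ (i + 1)) = a + y := by
          rw [hbx, hpx, add_zero, hΔx]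
        have hDx : D (i + 1) (x : Γ (i + 1)) = 0 := x.2
        have hDy : D (i + 1) y = 0 := by
          have : D (i + 1) (x : Γ (i + 1)) = D (i + 1) a + D (i + 1) y := by
            rw [hxay, map_add]
          rw [hDx, hA, hDD i (Dstar i u), zero_add] at this
          exact this.symm
        have hy0 : y = 0 := by
          have hin : (inner A y y : A) = 0 := by
            rw [hy, hadj' (i + 1) (D (i + 1) u) y, hDy, PHM.inner_zero_right]
          exact (PreHilbertModule.inner_self_eq_zero _).mp hin
        exact ⟨Dstar i u, by rw [hxay, hy0, add_zero]; rfl⟩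
      · rintro ⟨w, hw⟩
        set q := p (i + 1) (x : Γ (i + 1)) with hq
        obtain ⟨hDq, hDsq⟩ := harm i q (hppt (x : Γ (i + 1)))
        have hqeq : q = (x : Γ (i + 1)) - Δ (i + 1) (g (i + 1) (x : Γ (i + 1))) :=
          eq_sub_of_add_eq' hbx.symm
        have h1 : (inner A (x : Γ (i + 1)) q : A) = 0 := by
          rw [← hw, ContinuousLinearMap.coe_coe, hadj i w q, hDsq, PHM.inner_zero_right]
        have h2 : (inner A (Δ (i + 1) (g (i + 1) (x : Γ (i + 1)))) q : A) = 0 := by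
          rw [hΔx, PreHilbertModule.inner_add_left]
          rw [hadj i (Dstar i (g (i + 1) (x : Γ (i + 1)))) q, hDsq,
            PHM.inner_zero_right,
            hadj' (i + 1) (D (i + 1) (g (i + 1) (x : Γ (i + 1)))) q, hDq,
            PHM.inner_zero_right, add_zero]
        have hin : (inner A q q : A) = 0 := by
          nth_rewrite 1 [hqeq]
          rw [PHM.inner_sub_left, h1, h2, sub_zero]
        exact (PreHilbertModule.inner_self_eq_zero _).mp hin
    have hsurj : Function.Surjective f := by
      rintro ⟨y, hy⟩
      have hy' : Δ (i + 1) y = 0 := hy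
      obtain ⟨hDy, _⟩ := harm i y hy'
      refine ⟨⟨y, hDy⟩, ?_⟩
      have hpy : p (i + 1) y = y := by
        have h := DFunLike.congr_fun (ha (i + 1)) y
        simp only [ContinuousLinearMap.id_apply, ContinuousLinearMap.add_apply,
          ContinuousLinearMap.comp_apply] at h
        rw [hy', map_zero, zero_add] at h
        exact h.symm
      exact Subtype.ext hpy
    exact ⟨(Submodule.quotEquivOfEq _ _ hker.symm).trans
      (LinearMap.quotKerEquivOfSurjective f hsurj)⟩
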